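/- Let Q be a unital quantale with unit e and let γ ∈ Q be such that {m ∈ Q | m ≤ e} \ {e} = {m ∈ Q | m ≤ γ} and {m ∈ Q | e ≤ m} \ {e} = {⊤}. If ⨅ {β ⊔ γ | β ∈ Q, β ≠ e, β ≠ ⊤, β ≰ γ} ≤ γ, then ⊤ * γ ≤ γ and γ * ⊤ ≤ γ (γ is two-sided). -/
import Mathlib


/-- In a unital quantale whose unit `e` is isolated with `e⁻ = γ` and
`e⁺ = ⊤`, if `⨅ {β ⊔ γ | β ∈ Q, β ≠ e, β ≠ ⊤, β ≰ γ} ≤ γ`, then `γ` is two-sided: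
`⊤ * γ ≤ γ` and `γ * ⊤ ≤ γ`. -/
theorem stmt_9 {Q : Type*} [CompleteLattice Q] (mul : Q → Q → Q)
    (hassoc : ∀ a b c : Q, mul (mul a b) c = mul a (mul b c))
    (hsSup_left : ∀ (A : Set Q) (b : Q), mul (sSup A) b = ⨆ a ∈ A, mul a b)
    (hsSup_right : ∀ (A : Set Q) (b : Q), mul b (sSup A) = ⨆ a ∈ A, mul b a)
    (e : Q) (he_left : ∀ a : Q, mul e a = a) (he_right : ∀ a : Q, mul a e = a)
    (γ : Q)
    (hdown : {m : Q | m ≤ e} \ {e} = {m : Q | m ≤ γ})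
    (hup : {m : Q | e ≤ m} \ {e} = {(⊤ : Q)})
    (hinf : sInf {z : Q | ∃ β : Q, β ≠ e ∧ β ≠ ⊤ ∧ ¬ β ≤ γ ∧ z = β ⊔ γ} ≤ γ) :
    mul ⊤ γ ≤ γ ∧ mul γ ⊤ ≤ γ := by
  have hγmem : γ ∈ ({m : Q | m ≤ e} \ {e}) := by rw [hdown]; exact le_refl γ
  have hγe : γ ≤ e := hγmem.1
  have hsupl : ∀ x y z : Q, mul (x ⊔ y) z = mul x z ⊔ mul y z := by
    intro x y z
    have h := hsSup_left {x, y} z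
    rw [sSup_pair, iSup_pair] at h
    exact h
  have hsupr : ∀ x y z : Q, mul z (x ⊔ y) = mul z x ⊔ mul z y := by
    intro x y z
    have h := hsSup_right {x, y} z
    rw [sSup_pair, iSup_pair] at h
    exact h
  have key : ∀ β : Q, β ≠ e → ¬ β ≤ γ → e ⊔ β = ⊤ := by
    intro β hβe hβγ
    have hβnle : ¬ β ≤ e := by
      intro h
      have hm : β ∈ ({m : Q | m ≤ e} \ {e}) := ⟨h, hβe⟩
      rw [hdown] at hm
      exact hβγ hm
    have : (e ⊔ β) ∈ ({m : Q | e ≤ m} \ {e}) := by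
      refine ⟨le_sup_left, ?_⟩
      intro h
      exact hβnle (by rw [Set.mem_singleton_iff] at h; exact h ▸ le_sup_right)
    rw [hup] at this
    exact this
  have hmulβγ : ∀ β : Q, mul β γ ≤ β := by
    intro β
    have h1 : γ ⊔ e = e := sup_eq_right.mpr hγe
    have h2 : mul β e = mul β γ ⊔ mul β e := by rw [← hsupr, h1]
    calc mul β γ ≤ mul β γ ⊔ mul β e := le_sup_left
      _ = mul β e := h2.symm
      _ = β := he_right β
  have hγmulβ : ∀ β : Q, mul γ β ≤ β := by
    intro β
    have h1 : γ ⊔ e = e := sup_eq_right.mpr hγe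
    have h2 : mul e β = mul γ β ⊔ mul e β := by rw [← hsupl, h1]
    calc mul γ β ≤ mul γ β ⊔ mul e β := le_sup_left
      _ = mul e β := h2.symm
      _ = β := he_left β
  constructor
  · refine le_trans (le_trans (le_sInf ?_) hinf) le_rfl
    rintro z ⟨β, hβe, hβt, hβγ, rfl⟩
    calc mul ⊤ γ = mul (e ⊔ β) γ := by rw [key β hβe hβγ]
      _ = mul e γ ⊔ mul β γ := hsupl e β γ
      _ = γ ⊔ mul β γ := by rw [he_left]
      _ ≤ γ ⊔ β := sup_le_sup_left (hmulβγ β) γ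
      _ = β ⊔ γ := sup_comm γ β
  · refine le_trans (le_trans (le_sInf ?_) hinf) le_rfl
    rintro z ⟨β, hβe, hβt, hβγ, rfl⟩
    calc mul γ ⊤ = mul γ (e ⊔ β) := by rw [key β hβe hβγ]
      _ = mul γ e ⊔ mul γ β := hsupr e β γ
      _ = γ ⊔ mul γ β := by rw [he_right]
      _ ≤ γ ⊔ β := sup_le_sup_left (hγmulβ β) γ
      _ = β ⊔ γ := sup_comm γ β
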